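/- Let $a > 3/2$, $\varepsilon \in (0,1)$, and let $f:\mathbb{R}\to\mathbb{R}$ satisfy $f(x) = e^{x^2/4} x^{-a}(2\pi)^{1/4}$ for $x \geq \sqrt{2a}$ and be bounded, nonnegative, and nondecreasing on $[\sqrt{2a},\infty)$. Then $\int_{\mathbb{R}} \left|\frac{f(x+\varepsilon)-f(x)}{\varepsilon}\right|^2 \phi(x)\,dx = +\infty$, where $\phi$ is the standard Gaussian density. -/

import Mathlib

open MeasureTheory Real Set

set_option maxHeartbeats 1000000 in
/-- let `a > 3/2`, `ε ∈ (0,1)`, and let `f : ℝ → ℝ` equal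
`e^{x²/4} x^{-a} (2π)^{1/4}` on `[√(2a), ∞)`, be bounded off `[√(2a), ∞)`, and be
nonnegative and nondecreasing on `[√(2a), ∞)`. Then
`∫_ℝ |(f(x+ε) - f(x))/ε|² φ(x) dx = +∞`. -/
theorem stmt3 (a : ℝ) (ha : 3 / 2 < a) (ε : ℝ) (hε : ε ∈ Ioo (0 : ℝ) 1)
    (f φ : ℝ → ℝ)
    (hf : ∀ x ≥ Real.sqrt (2 * a),
      f x = Real.exp (x ^ 2 / 4) * x ^ (-a) * (2 * π) ^ ((1 : ℝ) / 4))
    (hbdd : ∃ C, ∀ x < Real.sqrt (2 * a), |f x| ≤ C)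
    (hnonneg : ∀ x ≥ Real.sqrt (2 * a), 0 ≤ f x)
    (hmono : MonotoneOn f (Ici (Real.sqrt (2 * a))))
    (hφ : ∀ x, φ x = Real.exp (-x ^ 2 / 2) / Real.sqrt (2 * π)) :
    ∫⁻ x, ENNReal.ofReal (|(f (x + ε) - f x) / ε| ^ 2 * φ x) = ⊤ := by
  obtain ⟨hε0, hε1⟩ := hε
  have hπ : (0:ℝ) < 2 * π := by positivity
  have hC : (0:ℝ) < (2 * π) ^ ((1:ℝ)/4) := Real.rpow_pos_of_pos hπ _
  have hev : ∀ᶠ x in Filter.atTop, (1:ℝ) ≤ |(f (x + ε) - f x) / ε| ^ 2 * φ x := by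
    have T1 : Filter.Tendsto (fun x : ℝ => Real.exp (ε/2 * x)) Filter.atTop Filter.atTop :=
      Real.tendsto_exp_atTop.comp (Filter.Tendsto.const_mul_atTop (by linarith) Filter.tendsto_id)
    have T2 : Filter.Tendsto (fun x : ℝ => Real.exp (ε * x) / x ^ (2*a) * (2:ℝ) ^ (-(2*a)))
        Filter.atTop Filter.atTop :=
      (tendsto_exp_mul_div_rpow_atTop (2*a) ε hε0).atTop_mul_const
        (Real.rpow_pos_of_pos two_pos _)
    filter_upwards [Filter.eventually_ge_atTop (Real.sqrt (2*a)),
      Filter.eventually_ge_atTop (1:ℝ),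
      T1.eventually_ge_atTop ((2:ℝ) ^ (a+1)),
      T2.eventually_ge_atTop (4 * ε^2)] with x hx1 hx2 hx3 hx4
    have hx0 : (0:ℝ) < x := lt_of_lt_of_le one_pos hx2
    have hxε : x + ε ≥ Real.sqrt (2*a) := le_trans hx1 (by linarith)
    have hxεpos : (0:ℝ) < x + ε := by linarith
    have ffx := hf x hx1
    have ffxe := hf (x+ε) hxε
    -- Claim A : 2 * f x ≤ f (x + ε)
    have e1 : Real.exp (x^2/4) * (2:ℝ)^(a+1) ≤ Real.exp ((x+ε)^2/4) := by
      calc Real.exp (x^2/4) * (2:ℝ)^(a+1)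
          ≤ Real.exp (x^2/4) * Real.exp (ε/2 * x) := by
            apply mul_le_mul_of_nonneg_left hx3 (Real.exp_pos _).le
        _ = Real.exp (x^2/4 + ε/2 * x) := (Real.exp_add _ _).symm
        _ ≤ Real.exp ((x+ε)^2/4) := by
            apply Real.exp_le_exp.mpr; nlinarith [sq_nonneg ε]
    have e2 : (2:ℝ)^(-a) * x^(-a) ≤ (x+ε)^(-a) := by
      calc (2:ℝ)^(-a) * x^(-a) = (2*x)^(-a) := (Real.mul_rpow (by norm_num) hx0.le).symm
        _ ≤ (x+ε)^(-a) :=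
            Real.rpow_le_rpow_of_nonpos hxεpos (by linarith) (by linarith)
    have key1 : 2 * f x ≤ f (x + ε) := by
      rw [ffx, ffxe]
      have h2 : (2:ℝ)^(a+1) * (2:ℝ)^(-a) = 2 := by
        rw [← Real.rpow_add two_pos]
        norm_num
      calc 2 * (Real.exp (x^2/4) * x^(-a) * (2*π)^((1:ℝ)/4))
          = ((2:ℝ)^(a+1) * (2:ℝ)^(-a)) * (Real.exp (x^2/4) * x^(-a) * (2*π)^((1:ℝ)/4)) := by
            rw [h2]
        _ = (Real.exp (x^2/4) * (2:ℝ)^(a+1)) * ((2:ℝ)^(-a) * x^(-a)) * (2*π)^((1:ℝ)/4) := by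
            ring
        _ ≤ Real.exp ((x+ε)^2/4) * (x+ε)^(-a) * (2*π)^((1:ℝ)/4) := by
            apply mul_le_mul_of_nonneg_right _ hC.le
            apply mul_le_mul e1 e2 _ (Real.exp_pos _).le
            positivity
    have hfxe0 : 0 ≤ f (x+ε) := hnonneg _ hxε
    have hφnn : 0 ≤ φ x := by rw [hφ]; positivity
    -- squared value computation
    have hC2 : ((2*π) ^ ((1:ℝ)/4))^2 = Real.sqrt (2*π) := by
      have h14 : ((1:ℝ)/4) * ((2:ℕ):ℝ) = 1/2 := by norm_num
      rw [← Real.rpow_natCast ((2*π) ^ ((1:ℝ)/4)) 2, ← Real.rpow_mul hπ.le, h14,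
        ← Real.sqrt_eq_rpow]
    have hP2 : ((x+ε) ^ (-a))^2 = (x+ε) ^ (-(2*a)) := by
      rw [← Real.rpow_natCast ((x+ε) ^ (-a)) 2, ← Real.rpow_mul hxεpos.le]
      norm_num
      ring_nf
    have hE2 : (Real.exp ((x+ε)^2/4))^2 = Real.exp ((x+ε)^2/2) := by
      rw [sq, ← Real.exp_add]; ring_nf
    have hsqpos : (0:ℝ) < Real.sqrt (2*π) := Real.sqrt_pos.mpr hπ
    have key3calc : (f (x+ε))^2 * φ x = Real.exp (ε*x + ε^2/2) * (x+ε)^(-(2*a)) := by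
      rw [ffxe, hφ x, mul_pow, mul_pow, hC2, hP2, hE2]
      calc Real.exp ((x+ε)^2/2) * (x+ε)^(-(2*a)) * Real.sqrt (2*π) *
            (Real.exp (-x^2/2) / Real.sqrt (2*π))
          = (Real.exp ((x+ε)^2/2) * Real.exp (-x^2/2)) * (x+ε)^(-(2*a)) := by
            field_simp
        _ = Real.exp (ε*x + ε^2/2) * (x+ε)^(-(2*a)) := by
            rw [← Real.exp_add]; ring_nf
    -- lower bound for the squared value
    have b1 : Real.exp (ε*x) ≤ Real.exp (ε*x + ε^2/2) :=
      Real.exp_le_exp.mpr (by nlinarith)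
    have b2 : (2*x) ^ (-(2*a)) ≤ (x+ε) ^ (-(2*a)) :=
      Real.rpow_le_rpow_of_nonpos hxεpos (by linarith) (by linarith)
    have b3 : (2*x)^(-(2*a)) = (2:ℝ)^(-(2*a)) * x^(-(2*a)) :=
      Real.mul_rpow (by norm_num) hx0.le
    have hx4' : 4 * ε^2 ≤ Real.exp (ε*x + ε^2/2) * (x+ε)^(-(2*a)) := by
      have hxinv : Real.exp (ε * x) / x ^ (2*a) * (2:ℝ) ^ (-(2*a))
          = Real.exp (ε*x) * ((2*x) ^ (-(2*a))) := by
        rw [b3, Real.rpow_neg hx0.le, div_eq_mul_inv]; ring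
      calc 4 * ε^2 ≤ Real.exp (ε * x) / x ^ (2*a) * (2:ℝ) ^ (-(2*a)) := hx4
        _ = Real.exp (ε*x) * ((2*x) ^ (-(2*a))) := hxinv
        _ ≤ Real.exp (ε*x + ε^2/2) * (x+ε)^(-(2*a)) := by
            apply mul_le_mul b1 b2 (Real.rpow_nonneg (by linarith) _) (Real.exp_pos _).le
    have key3 : 1 ≤ (f (x+ε)/(2*ε))^2 * φ x := by
      have heq : (f (x+ε)/(2*ε))^2 * φ x
          = Real.exp (ε*x + ε^2/2) * (x+ε)^(-(2*a)) / (4*ε^2) := by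
        rw [div_pow, div_mul_eq_mul_div, key3calc]
        ring_nf
      rw [heq, le_div_iff₀ (by positivity), one_mul]
      exact hx4'
    -- combine
    have h2 : f (x+ε)/(2*ε) ≤ (f (x + ε) - f x)/ε := by
      rw [div_le_div_iff₀ (by positivity) hε0]
      nlinarith [mul_le_mul_of_nonneg_right key1 hε0.le]
    have h1 : 0 ≤ f (x+ε)/(2*ε) := div_nonneg hfxe0 (by positivity)
    have chain : (f (x+ε)/(2*ε))^2 ≤ |(f (x + ε) - f x)/ε|^2 := by
      calc (f (x+ε)/(2*ε))^2 ≤ ((f (x + ε) - f x)/ε)^2 := pow_le_pow_left₀ h1 h2 2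
        _ = |(f (x + ε) - f x)/ε|^2 := (sq_abs _).symm
    calc (1:ℝ) ≤ (f (x+ε)/(2*ε))^2 * φ x := key3
      _ ≤ |(f (x + ε) - f x)/ε|^2 * φ x := mul_le_mul_of_nonneg_right chain hφnn
  obtain ⟨M, hM⟩ := Filter.eventually_atTop.mp hev
  rw [eq_top_iff]
  calc (⊤:ENNReal) = volume (Ici M) := Real.volume_Ici.symm
    _ = ∫⁻ _ in Ici M, 1 := (setLIntegral_one _).symm
    _ ≤ ∫⁻ x in Ici M, ENNReal.ofReal (|(f (x + ε) - f x) / ε| ^ 2 * φ x) := by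
        apply setLIntegral_mono' measurableSet_Ici
        intro x hx
        exact ENNReal.one_le_ofReal.mpr (hM x hx)
    _ ≤ ∫⁻ x, ENNReal.ofReal (|(f (x + ε) - f x) / ε| ^ 2 * φ x) :=
        setLIntegral_le_lintegral _ _
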